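/- Let G be a finite connected weighted graph with lazy random walk transition matrix P = (I + D^{−1}A)/2 and stationary distribution π(x) = w(x)/vol(V). Then for every vertex x and every integer t ≥ 1, p_t(x,x) = ⟨P^t 1_x, 1_x⟩ satisfies p_t(x,x)/π(x) − 1 < 2·vol(V)·R_diam(x)/t, where R_diam(x) = max_y R_eff(x,y). -/

import Mathlib

/-- Energy of `f` on the weighted graph with weight matrix `W` (sum over unordered pairs). -/
noncomputable def energyW {n : ℕ} (W : Matrix (Fin n) (Fin n) ℝ) (f : Fin n → ℝ) : ℝ :=
  (∑ x, ∑ y, W x y * (f x - f y) ^ 2) / 2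

/-- Effective conductance between `s` and `t`. -/
noncomputable def Ceff {n : ℕ} (W : Matrix (Fin n) (Fin n) ℝ) (s t : Fin n) : ℝ :=
  sInf {q | ∃ f : Fin n → ℝ, f s ≠ f t ∧ q = energyW W f / (f s - f t) ^ 2}

/-- Effective resistance between `s` and `t`. -/
noncomputable def Reff {n : ℕ} (W : Matrix (Fin n) (Fin n) ℝ) (s t : Fin n) : ℝ :=
  (Ceff W s t)⁻¹

/-- Transition matrix `P = (I + D⁻¹A)/2` of the lazy random walk. -/
noncomputable def lazyP {n : ℕ} (W : Matrix (Fin n) (Fin n) ℝ) :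
    Matrix (Fin n) (Fin n) ℝ :=
  Matrix.of fun x y => ((if x = y then (1 : ℝ) else 0) + W x y / (∑ z, W x z)) / 2

open Matrix Finset

namespace Stmt6Aux

variable {n : ℕ}

/-- degree -/
noncomputable def degW (W : Matrix (Fin n) (Fin n) ℝ) (z : Fin n) : ℝ := ∑ y, W z y

noncomputable def volW (W : Matrix (Fin n) (Fin n) ℝ) : ℝ := ∑ z, degW W z

noncomputable def sdW (W : Matrix (Fin n) (Fin n) ℝ) (z : Fin n) : ℝ :=
  Real.sqrt (degW W z)

/-- symmetrized lazy walk matrix -/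
noncomputable def symM (W : Matrix (Fin n) (Fin n) ℝ) : Matrix (Fin n) (Fin n) ℝ :=
  Matrix.of fun z y =>
    ((if z = y then (1 : ℝ) else 0) + W z y / (sdW W z * sdW W y)) / 2

noncomputable def phiW (W : Matrix (Fin n) (Fin n) ℝ) : Fin n → ℝ :=
  fun z => sdW W z / Real.sqrt (volW W)

noncomputable def QW (W : Matrix (Fin n) (Fin n) ℝ) : Matrix (Fin n) (Fin n) ℝ :=
  symM W - vecMulVec (phiW W) (phiW W)

section Basic

variable {W : Matrix (Fin n) (Fin n) ℝ}
  (hsym : ∀ x y, W x y = W y x) (hnn : ∀ x y, 0 ≤ W x y)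

include hnn in
lemma energy_nonneg (f : Fin n → ℝ) : 0 ≤ energyW W f := by
  apply div_nonneg _ (by norm_num)
  apply Finset.sum_nonneg; intro z _
  apply Finset.sum_nonneg; intro y _
  exact mul_nonneg (hnn z y) (sq_nonneg _)

include hsym hnn in
lemma edge_le_energy (a b : Fin n) (f : Fin n → ℝ) :
    W a b * (f a - f b) ^ 2 ≤ energyW W f := by
  rcases eq_or_ne a b with rfl | hab
  · have h0 : W a a * (f a - f a) ^ 2 = 0 := by ring_nf
    rw [h0]; exact energy_nonneg hnn f
  · rw [energyW, le_div_iff₀ (by norm_num : (0:ℝ) < 2)]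
    have h1 : ∑ x, ∑ y, W x y * (f x - f y) ^ 2
        = ∑ p : Fin n × Fin n, W p.1 p.2 * (f p.1 - f p.2) ^ 2 := by
      rw [← Finset.sum_product']
      rfl
    rw [h1]
    have h2 : ({(a, b), (b, a)} : Finset (Fin n × Fin n)) ⊆ Finset.univ := by
      simp
    have h3 : ∑ p ∈ ({(a, b), (b, a)} : Finset (Fin n × Fin n)),
        W p.1 p.2 * (f p.1 - f p.2) ^ 2
        ≤ ∑ p : Fin n × Fin n, W p.1 p.2 * (f p.1 - f p.2) ^ 2 := by
      apply Finset.sum_le_sum_of_subset_of_nonneg h2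
      intro p _ _
      exact mul_nonneg (hnn _ _) (sq_nonneg _)
    have h4 : ∑ p ∈ ({(a, b), (b, a)} : Finset (Fin n × Fin n)),
        W p.1 p.2 * (f p.1 - f p.2) ^ 2
        = W a b * (f a - f b) ^ 2 + W b a * (f b - f a) ^ 2 := by
      rw [Finset.sum_insert (by simp [Prod.ext_iff, hab]), Finset.sum_singleton]
    have h5 : W b a * (f b - f a) ^ 2 = W a b * (f a - f b) ^ 2 := by
      rw [hsym b a]; ring
    nlinarith [h3, h4, h5]

include hsym hnn in
lemma walk_bound {s t : Fin n}
    (p : (SimpleGraph.fromRel fun a b => W a b ≠ 0).Walk s t) :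
    ∃ c : ℝ, 0 < c ∧ ∀ f : Fin n → ℝ, (f s - f t) ^ 2 ≤ c * energyW W f := by
  induction p with
  | nil =>
    exact ⟨1, one_pos, fun f => by simpa using energy_nonneg hnn f⟩
  | @cons s v t h p ih =>
    obtain ⟨c, hc, hcf⟩ := ih
    rw [SimpleGraph.fromRel_adj] at h
    have hW : 0 < W s v := by
      rcases h.2 with h1 | h1
      · exact lt_of_le_of_ne (hnn s v) (Ne.symm h1)
      · rw [hsym s v]; exact lt_of_le_of_ne (hnn v s) (Ne.symm h1)
    refine ⟨2 / W s v + 2 * c, by positivity, fun f => ?_⟩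
    have h1 : W s v * (f s - f v) ^ 2 ≤ energyW W f := edge_le_energy hsym hnn s v f
    have h2 : (f v - f t) ^ 2 ≤ c * energyW W f := hcf f
    have h3 : (f s - f t) ^ 2 ≤ 2 * (f s - f v) ^ 2 + 2 * (f v - f t) ^ 2 := by nlinarith [sq_nonneg (f s + f t - 2 * f v)]
    have h4 : (f s - f v) ^ 2 ≤ energyW W f / W s v := by
      rw [le_div_iff₀ hW]; nlinarith
    have h5 : 0 ≤ energyW W f := energy_nonneg hnn f
    rw [add_mul, div_mul_eq_mul_div, mul_comm (2:ℝ) (energyW W f)]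
    calc (f s - f t) ^ 2 ≤ 2 * (f s - f v) ^ 2 + 2 * (f v - f t) ^ 2 := h3
      _ ≤ 2 * (energyW W f / W s v) + 2 * (c * energyW W f) := by
          apply add_le_add
          · nlinarith
          · nlinarith
      _ = energyW W f * 2 / W s v + 2 * c * energyW W f := by ring
end Basic


section Res

variable {W : Matrix (Fin n) (Fin n) ℝ}
  (hsym : ∀ x y, W x y = W y x) (hnn : ∀ x y, 0 ≤ W x y)
  (hconn : (SimpleGraph.fromRel fun x y => W x y ≠ 0).Connected)

include hsym hnn hconn in
lemma path_bound (s t : Fin n) :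
    ∃ c : ℝ, 0 < c ∧ ∀ f : Fin n → ℝ, (f s - f t) ^ 2 ≤ c * energyW W f := by
  obtain ⟨p⟩ := hconn.preconnected s t
  exact walk_bound hsym hnn p

include hnn in
lemma Ceff_bddBelow (s t : Fin n) :
    BddBelow {q | ∃ f : Fin n → ℝ, f s ≠ f t ∧ q = energyW W f / (f s - f t) ^ 2} := by
  refine ⟨0, fun q hq => ?_⟩
  obtain ⟨f, hf, rfl⟩ := hq
  exact div_nonneg (energy_nonneg hnn f) (sq_nonneg _)

include hsym hnn hconn in
lemma Ceff_pos {s t : Fin n} (hst : s ≠ t) : 0 < Ceff W s t := by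
  obtain ⟨c, hc, hcf⟩ := path_bound hsym hnn hconn s t
  have hne : {q | ∃ f : Fin n → ℝ, f s ≠ f t ∧ q = energyW W f / (f s - f t) ^ 2}.Nonempty := by
    refine ⟨_, fun z => if z = t then (1:ℝ) else 0, by simp [hst], rfl⟩
  have : (1/c : ℝ) ≤ Ceff W s t := by
    apply le_csInf hne
    rintro q ⟨f, hf, rfl⟩
    have hd : 0 < (f s - f t) ^ 2 := by
      have : f s - f t ≠ 0 := sub_ne_zero_of_ne hf
      positivity
    have := hcf f
    rw [div_le_div_iff₀ hc hd, one_mul]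
    nlinarith
  linarith [this, one_div_pos.mpr hc]

include hnn in
lemma Ceff_le {s t : Fin n} (f : Fin n → ℝ) (hf : f s ≠ f t) :
    Ceff W s t ≤ energyW W f / (f s - f t) ^ 2 :=
  csInf_le (Ceff_bddBelow hnn s t) ⟨f, hf, rfl⟩

include hsym hnn hconn in
lemma sq_le_Reff_mul_energy {s t : Fin n} (f : Fin n → ℝ) (hf : f s ≠ f t) :
    (f s - f t) ^ 2 ≤ Reff W s t * energyW W f := by
  have hst : s ≠ t := fun h => hf (by rw [h])
  have hC : 0 < Ceff W s t := Ceff_pos hsym hnn hconn hst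
  have hle : Ceff W s t ≤ energyW W f / (f s - f t) ^ 2 := Ceff_le hnn f hf
  have hd : 0 < (f s - f t) ^ 2 := by
    have : f s - f t ≠ 0 := sub_ne_zero_of_ne hf
    positivity
  have hE : 0 < energyW W f := by
    by_contra hE
    push_neg at hE
    have : energyW W f / (f s - f t) ^ 2 ≤ 0 := div_nonpos_of_nonpos_of_nonneg hE hd.le
    linarith
  rw [le_div_iff₀ hd] at hle
  rw [Reff, le_inv_mul_iff₀ hC]
  nlinarith

lemma Reff_self (s : Fin n) : Reff W s s = 0 := by
  have : {q | ∃ f : Fin n → ℝ, f s ≠ f s ∧ q = energyW W f / (f s - f s) ^ 2} = ∅ := by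
    ext q; simp
  rw [Reff, Ceff, this, Real.sInf_empty, _root_.inv_zero]

lemma Rdiam_bddAbove (x : Fin n) :
    BddAbove {r | ∃ y : Fin n, r = Reff W x y} := by
  have : {r | ∃ y : Fin n, r = Reff W x y} = Set.range (fun y => Reff W x y) := by
    ext r; simp [eq_comm]
  rw [this]
  exact (Set.finite_range _).bddAbove

lemma Reff_le_Rdiam (x y : Fin n) :
    Reff W x y ≤ sSup {r | ∃ y : Fin n, r = Reff W x y} :=
  le_csSup (Rdiam_bddAbove x) ⟨y, rfl⟩

lemma Rdiam_nonneg (x : Fin n) : 0 ≤ sSup {r | ∃ y : Fin n, r = Reff W x y} := by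
  have := Reff_le_Rdiam (W := W) x x
  rwa [Reff_self] at this

end Res


/-- off-diagonal normalized adjacency -/
noncomputable def NW (W : Matrix (Fin n) (Fin n) ℝ) : Matrix (Fin n) (Fin n) ℝ :=
  Matrix.of fun z y => W z y / (sdW W z * sdW W y)

section Quad

variable {W : Matrix (Fin n) (Fin n) ℝ}
  (hsym : ∀ x y, W x y = W y x) (hnn : ∀ x y, 0 ≤ W x y)
  (hd : ∀ z, 0 < degW W z)

include hd in
lemma sd_pos (z : Fin n) : 0 < sdW W z := Real.sqrt_pos.mpr (hd z)

include hd in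
lemma sd_sq (z : Fin n) : sdW W z * sdW W z = degW W z :=
  Real.mul_self_sqrt (hd z).le

lemma symM_eq : symM W = (2⁻¹ : ℝ) • (1 + NW W) := by
  ext z y
  simp only [symM, NW, Matrix.of_apply, Matrix.smul_apply, Matrix.add_apply, Matrix.one_apply,
    smul_eq_mul]
  ring

include hsym in
lemma col_sum (y : Fin n) : ∑ z, W z y = degW W y := by
  rw [degW]
  exact Finset.sum_congr rfl fun z _ => hsym z y

lemma dot_NW (v : Fin n → ℝ) :
    v ⬝ᵥ NW W *ᵥ v = ∑ z, ∑ y, W z y * (v z / sdW W z) * (v y / sdW W y) := by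
  simp only [dotProduct, mulVec, NW, Matrix.of_apply]
  refine Finset.sum_congr rfl fun z _ => ?_
  rw [Finset.mul_sum]
  refine Finset.sum_congr rfl fun y _ => by ring

include hsym in
lemma expand_pm (a : Fin n → ℝ) (ε : ℝ) :
    ∑ z, ∑ y, W z y * (a z + ε * a y) ^ 2
      = (1 + ε ^ 2) * (∑ z, degW W z * a z ^ 2)
        + 2 * ε * ∑ z, ∑ y, W z y * a z * a y := by
  have h1 : ∀ z, ∑ y, W z y * (a z + ε * a y) ^ 2
      = degW W z * a z ^ 2 + ε ^ 2 * (∑ y, W z y * a y ^ 2)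
        + 2 * ε * ∑ y, W z y * a z * a y := by
    intro z
    rw [degW, Finset.sum_mul, Finset.mul_sum, Finset.mul_sum, ← Finset.sum_add_distrib,
      ← Finset.sum_add_distrib]
    refine Finset.sum_congr rfl fun y _ => by ring
  rw [Finset.sum_congr rfl fun z _ => h1 z]
  rw [Finset.sum_add_distrib, Finset.sum_add_distrib, ← Finset.mul_sum, ← Finset.mul_sum]
  have h2 : ∑ z, ∑ y, W z y * a y ^ 2 = ∑ z, degW W z * a z ^ 2 := by
    rw [Finset.sum_comm]
    refine Finset.sum_congr rfl fun y _ => ?_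
    rw [← Finset.sum_mul, col_sum hsym]
  rw [h2]; ring

include hd in
lemma sum_deg_ratio (v : Fin n → ℝ) :
    ∑ z, degW W z * (v z / sdW W z) ^ 2 = ∑ z, v z ^ 2 := by
  refine Finset.sum_congr rfl fun z _ => ?_
  have h : sdW W z ^ 2 = degW W z := Real.sq_sqrt (hd z).le
  rw [div_pow, h]
  field_simp [(hd z).ne']

include hsym hd in
lemma dot_symM (v : Fin n → ℝ) :
    v ⬝ᵥ symM W *ᵥ v
      = (∑ z, ∑ y, W z y * (v z / sdW W z + v y / sdW W y) ^ 2) / 4 := by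
  have key := expand_pm hsym (fun z => v z / sdW W z) 1
  simp only [one_mul, one_pow] at key
  rw [symM_eq, smul_mulVec, dotProduct_smul, add_mulVec, one_mulVec, dotProduct_add,
    dot_NW, key, sum_deg_ratio hd]
  have : v ⬝ᵥ v = ∑ z, v z ^ 2 := by
    simp [dotProduct, sq]
  rw [this]; simp only [smul_eq_mul]; ring

include hsym hd in
lemma dot_one_sub_symM (v : Fin n → ℝ) :
    v ⬝ᵥ (1 - symM W) *ᵥ v
      = (∑ z, ∑ y, W z y * (v z / sdW W z - v y / sdW W y) ^ 2) / 4 := by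
  have key := expand_pm hsym (fun z => v z / sdW W z) (-1)
  simp only [neg_one_sq] at key
  have key2 : ∑ z, ∑ y, W z y * (v z / sdW W z - v y / sdW W y) ^ 2
      = 2 * (∑ z, v z ^ 2) - 2 * ∑ z, ∑ y, W z y * (v z / sdW W z) * (v y / sdW W y) := by
    rw [Finset.sum_congr rfl fun z _ => Finset.sum_congr rfl fun y _ =>
      (by ring : W z y * (v z / sdW W z - v y / sdW W y) ^ 2
        = W z y * (v z / sdW W z + (-1) * (v y / sdW W y)) ^ 2), key, sum_deg_ratio hd]
    ring
  rw [sub_mulVec, dotProduct_sub, one_mulVec, symM_eq, smul_mulVec, dotProduct_smul,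
    add_mulVec, one_mulVec, dotProduct_add, dot_NW, key2]
  have : v ⬝ᵥ v = ∑ z, v z ^ 2 := by simp [dotProduct, sq]
  rw [this]; simp only [smul_eq_mul]; ring

include hsym hnn hd in
lemma symM_posSemidef_quad (v : Fin n → ℝ) : 0 ≤ v ⬝ᵥ symM W *ᵥ v := by
  rw [dot_symM hsym hd]
  apply div_nonneg _ (by norm_num)
  apply Finset.sum_nonneg; intro z _
  apply Finset.sum_nonneg; intro y _
  exact mul_nonneg (hnn z y) (sq_nonneg _)

include hsym hd in
lemma dot_one_sub_symM_energy (v : Fin n → ℝ) :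
    v ⬝ᵥ (1 - symM W) *ᵥ v = energyW W (fun z => v z / sdW W z) / 2 := by
  rw [dot_one_sub_symM hsym hd, energyW]
  ring

end Quad


section Spectral

variable {W : Matrix (Fin n) (Fin n) ℝ}
  (hsym : ∀ x y, W x y = W y x) (hnn : ∀ x y, 0 ≤ W x y)
  (hd : ∀ z, 0 < degW W z)
  (hconn : (SimpleGraph.fromRel fun x y => W x y ≠ 0).Connected)

/-- transpose of real hermitian matrix -/
lemma herm_transpose {A : Matrix (Fin n) (Fin n) ℝ} (hA : A.IsHermitian) : Aᵀ = A := by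
  ext z y
  have h := congrFun (congrFun (hA : Aᴴ = A) z) y
  simpa [Matrix.conjTranspose_apply] using h

lemma herm_dot_mulVec {A : Matrix (Fin n) (Fin n) ℝ} (hA : A.IsHermitian) (u v : Fin n → ℝ) :
    u ⬝ᵥ A *ᵥ v = (A *ᵥ u) ⬝ᵥ v := by
  rw [dotProduct_mulVec, ← Matrix.mulVec_transpose, herm_transpose hA]

include hd hconn in
lemma vol_pos : 0 < volW W := by
  have : Nonempty (Fin n) := hconn.nonempty
  exact Finset.sum_pos (fun z _ => hd z) Finset.univ_nonempty

include hd hconn in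
lemma sqv_pos : 0 < Real.sqrt (volW W) := Real.sqrt_pos.mpr (vol_pos hd hconn)

include hd hconn in
lemma phi_norm : phiW W ⬝ᵥ phiW W = 1 := by
  have hv := vol_pos hd hconn
  have h1 : ∀ z, phiW W z * phiW W z = degW W z / volW W := by
    intro z
    rw [phiW, div_mul_div_comm, sd_sq hd z, Real.mul_self_sqrt hv.le]
  rw [dotProduct, Finset.sum_congr rfl fun z _ => h1 z, ← Finset.sum_div, ← volW,
    div_self hv.ne']

include hsym in
lemma symM_herm : (symM W).IsHermitian := by
  rw [Matrix.IsHermitian]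
  ext z y
  simp only [Matrix.conjTranspose_apply, symM, Matrix.of_apply, star_trivial]
  rw [hsym y z, mul_comm (sdW W y) (sdW W z)]
  congr 2
  simp [eq_comm]

include hsym hnn hd hconn in
lemma symM_mulVec_phi : symM W *ᵥ phiW W = phiW W := by
  have hv := vol_pos hd hconn
  have hNphi : NW W *ᵥ phiW W = phiW W := by
    ext z
    have hz : sdW W z ≠ 0 := (sd_pos hd z).ne'
    have h1 : ∀ y, W z y / (sdW W z * sdW W y) * phiW W y
        = W z y / (sdW W z * Real.sqrt (volW W)) := by
      intro y
      have hy : sdW W y ≠ 0 := (sd_pos hd y).ne'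
      rw [phiW]
      field_simp
    simp only [mulVec, dotProduct, NW, Matrix.of_apply]
    rw [Finset.sum_congr rfl fun y _ => h1 y, ← Finset.sum_div]
    rw [show ∑ y, W z y = degW W z from rfl, phiW, ← sd_sq hd z]
    field_simp
  rw [symM_eq, smul_mulVec, add_mulVec, one_mulVec, hNphi]
  ext z
  simp only [Pi.smul_apply, Pi.add_apply, smul_eq_mul]
  ring

lemma vecMulVec_mulVec_eq (a b v : Fin n → ℝ) :
    vecMulVec a b *ᵥ v = (b ⬝ᵥ v) • a := by
  ext z
  simp only [mulVec, dotProduct, vecMulVec_apply, Pi.smul_apply, smul_eq_mul, Finset.sum_mul]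
  exact Finset.sum_congr rfl fun y _ => by ring

include hsym in
lemma Q_herm : (QW W).IsHermitian := by
  apply Matrix.IsHermitian.sub (symM_herm hsym)
  rw [Matrix.IsHermitian]
  ext z y
  simp only [Matrix.conjTranspose_apply, vecMulVec_apply, star_trivial]
  ring

include hsym hnn hd hconn in
lemma Q_mulVec_phi : QW W *ᵥ phiW W = 0 := by
  rw [QW, sub_mulVec, symM_mulVec_phi hsym hnn hd hconn, vecMulVec_mulVec_eq,
    phi_norm hd hconn, one_smul, sub_self]

lemma dot_Q (v : Fin n → ℝ) :
    v ⬝ᵥ QW W *ᵥ v = v ⬝ᵥ symM W *ᵥ v - (phiW W ⬝ᵥ v) ^ 2 := by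
  rw [QW, sub_mulVec, dotProduct_sub, vecMulVec_mulVec_eq, dotProduct_smul, smul_eq_mul,
    dotProduct_comm v (phiW W)]
  ring

include hsym hnn hd hconn in
lemma Q_psd : (QW W).PosSemidef := by
  refine Matrix.PosSemidef.of_dotProduct_mulVec_nonneg (Q_herm hsym) fun v => ?_
  simp only [star_trivial]
  rw [dot_Q]
  set c := phiW W ⬝ᵥ v with hc
  set w := v - c • phiW W with hw
  have hMphi := symM_mulVec_phi hsym hnn hd hconn
  have h1 : phiW W ⬝ᵥ symM W *ᵥ v = c := by
    rw [herm_dot_mulVec (symM_herm hsym), hMphi, hc, dotProduct_comm]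
  have h2 : v ⬝ᵥ phiW W = c := by rw [hc, dotProduct_comm]
  have h3 : phiW W ⬝ᵥ phiW W = 1 := phi_norm hd hconn
  have key : w ⬝ᵥ symM W *ᵥ w = v ⬝ᵥ symM W *ᵥ v - c ^ 2 := by
    rw [hw]
    simp only [mulVec_sub, mulVec_smul, hMphi, sub_dotProduct, dotProduct_sub,
      smul_dotProduct, dotProduct_smul, smul_eq_mul]
    rw [h1, h2, h3]
    ring
  rw [← key]
  exact symM_posSemidef_quad hsym hnn hd w

include hsym hnn hd hconn in
lemma one_sub_Q_posdef : (1 - QW W).PosDef := by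
  have hherm : (1 - QW W).IsHermitian :=
    Matrix.IsHermitian.sub Matrix.isHermitian_one (Q_herm hsym)
  refine Matrix.PosDef.of_dotProduct_mulVec_pos hherm fun v hv => ?_
  simp only [star_trivial]
  rw [sub_mulVec, dotProduct_sub, one_mulVec, dot_Q]
  set c := phiW W ⬝ᵥ v with hc
  set a := fun z => v z / sdW W z with ha
  have hE : v ⬝ᵥ (1 - symM W) *ᵥ v = energyW W a / 2 :=
    dot_one_sub_symM_energy hsym hd v
  have hsplit : v ⬝ᵥ v - (v ⬝ᵥ symM W *ᵥ v - c ^ 2) = energyW W a / 2 + c ^ 2 := by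
    rw [← hE, sub_mulVec, dotProduct_sub, one_mulVec]
    ring
  rw [hsplit]
  have hEnn : 0 ≤ energyW W a := energy_nonneg hnn a
  rcases lt_or_eq_of_le hEnn with hpos | hzero
  · nlinarith [sq_nonneg c]
  rcases (sq_nonneg c).lt_or_eq with hcpos | hczero
  · linarith
  exfalso
  apply hv
  have hc0 : c = 0 := pow_eq_zero_iff (by norm_num : 2 ≠ 0) |>.mp hczero.symm
  have hconst : ∀ z y : Fin n, a z = a y := by
    intro z y
    obtain ⟨cc, hcc, hcf⟩ := path_bound hsym hnn hconn z y
    have h := hcf a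
    rw [← hzero, mul_zero] at h
    have h0 : (a z - a y) ^ 2 = 0 := le_antisymm h (sq_nonneg _)
    have h1 := pow_eq_zero_iff (by norm_num : 2 ≠ 0) |>.mp h0
    linarith
  have : Nonempty (Fin n) := hconn.nonempty
  obtain ⟨z0⟩ := this
  have hvz : ∀ z, v z = a z0 * sdW W z := by
    intro z
    have h1 : a z = a z0 := hconst z z0
    have hz : sdW W z ≠ 0 := (sd_pos hd z).ne'
    have h2 : v z / sdW W z = a z0 := h1
    field_simp at h2
    linarith [h2]
  have hcval : c = a z0 * Real.sqrt (volW W) := by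
    rw [hc, dotProduct]
    have h1 : ∀ z, phiW W z * v z = a z0 * (degW W z / Real.sqrt (volW W)) := by
      intro z
      rw [hvz z, phiW, ← sd_sq hd z]
      ring
    rw [Finset.sum_congr rfl fun z _ => h1 z, ← Finset.mul_sum, ← Finset.sum_div, ← volW,
      Real.div_sqrt]
  have ha0 : a z0 = 0 := by
    rw [hcval] at hc0
    rcases mul_eq_zero.mp hc0 with h | h
    · exact h
    · exact absurd h (sqv_pos hd hconn).ne'
  funext z
  rw [hvz z, ha0]
  simp

end Spectral


section Green

variable {W : Matrix (Fin n) (Fin n) ℝ}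
  (hsym : ∀ x y, W x y = W y x) (hnn : ∀ x y, 0 ≤ W x y)
  (hd : ∀ z, 0 < degW W z)
  (hconn : (SimpleGraph.fromRel fun x y => W x y ≠ 0).Connected)

lemma entry_eq_dot (A : Matrix (Fin n) (Fin n) ℝ) (x : Fin n) :
    A x x = (Pi.single x 1 : Fin n → ℝ) ⬝ᵥ A *ᵥ (Pi.single x 1) := by
  rw [Matrix.mulVec_single, single_dotProduct]
  simp

include hsym hnn hd hconn in
lemma key_bound (x : Fin n) (t : ℕ) (ht : 1 ≤ t) :
    (t : ℝ) * (QW W ^ t) x x ≤ (1 - QW W)⁻¹ x x - 1 := by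
  classical
  have hQ : (QW W).PosSemidef := Q_psd hsym hnn hd hconn
  have hpd : (1 - QW W).PosDef := one_sub_Q_posdef hsym hnn hd hconn
  open scoped MatrixOrder in
  set S := CFC.sqrt (QW W) with hSdef
  open scoped MatrixOrder in
  have hSS : S * S = QW W := CFC.sqrt_mul_sqrt_self _ (Matrix.nonneg_iff_posSemidef.mpr hQ)
  open scoped MatrixOrder in
  have hSherm : S.IsHermitian := (Matrix.nonneg_iff_posSemidef.mp (CFC.sqrt_nonneg _)).1
  have hQle : ∀ w : Fin n → ℝ, w ⬝ᵥ QW W *ᵥ w ≤ w ⬝ᵥ w := by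
    intro w
    have h := hpd.posSemidef.dotProduct_mulVec_nonneg w
    simp only [star_trivial, sub_mulVec, dotProduct_sub, one_mulVec] at h
    linarith
  -- contraction property
  have hcontr : ∀ (k : ℕ) (v : Fin n → ℝ),
      (S ^ k *ᵥ v) ⬝ᵥ (S ^ k *ᵥ v) ≤ v ⬝ᵥ v := by
    intro k
    induction k with
    | zero => intro v; simp
    | succ k ih =>
      intro v
      have h1 : S ^ (k+1) *ᵥ v = S ^ k *ᵥ (S *ᵥ v) := by
        rw [Matrix.mulVec_mulVec, ← pow_succ]
      rw [h1]
      refine le_trans (ih (S *ᵥ v)) ?_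
      have h2 : (S *ᵥ v) ⬝ᵥ (S *ᵥ v) = v ⬝ᵥ QW W *ᵥ v := by
        rw [← herm_dot_mulVec hSherm v (S *ᵥ v), Matrix.mulVec_mulVec, hSS]
      rw [h2]
      exact hQle v
  have hQpow : ∀ m : ℕ, QW W ^ m = S ^ (2 * m) := by
    intro m
    rw [← hSS, ← sq, ← pow_mul]
  -- monotonicity of diagonal entries
  have hmono : ∀ s u : ℕ, s ≤ u → (QW W ^ u) x x ≤ (QW W ^ s) x x := by
    intro s u hsu
    set e : Fin n → ℝ := Pi.single x 1 with he
    rw [entry_eq_dot (QW W ^ u) x, entry_eq_dot (QW W ^ s) x]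
    have hdecomp : QW W ^ u = S ^ s * S ^ (2 * (u - s)) * S ^ s := by
      rw [hQpow u, ← pow_add, ← pow_add]
      congr 1
      omega
    rw [hdecomp, hQpow s]
    have hAherm : (S ^ s).IsHermitian := hSherm.pow s
    have h1 : e ⬝ᵥ (S ^ s * S ^ (2 * (u - s)) * S ^ s) *ᵥ e
        = (S ^ s *ᵥ e) ⬝ᵥ S ^ (2 * (u - s)) *ᵥ (S ^ s *ᵥ e) := by
      rw [← Matrix.mulVec_mulVec, ← Matrix.mulVec_mulVec, herm_dot_mulVec hAherm]
    have h2 : e ⬝ᵥ S ^ (2 * s) *ᵥ e = (S ^ s *ᵥ e) ⬝ᵥ (S ^ s *ᵥ e) := by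
      rw [two_mul, pow_add, ← Matrix.mulVec_mulVec, herm_dot_mulVec hAherm]
    rw [h1, h2]
    set w := S ^ s *ᵥ e with hwdef
    have h3 : w ⬝ᵥ S ^ (2 * (u - s)) *ᵥ w
        = (S ^ (u - s) *ᵥ w) ⬝ᵥ (S ^ (u - s) *ᵥ w) := by
      rw [two_mul, pow_add, ← Matrix.mulVec_mulVec, herm_dot_mulVec (hSherm.pow (u - s))]
    rw [h3]
    exact hcontr (u - s) w
  -- inverse и geometric sum
  have hdet : IsUnit (1 - QW W).det := isUnit_iff_ne_zero.mpr hpd.det_pos.ne'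
  haveI hinv : Invertible (1 - QW W) := (1 - QW W).invertibleOfIsUnitDet hdet
  set G := (1 - QW W)⁻¹ with hGdef
  have hGIQ : G * (1 - QW W) = 1 := Matrix.nonsing_inv_mul _ hdet
  have hIQG : (1 - QW W) * G = 1 := Matrix.mul_nonsing_inv _ hdet
  have hcommQS : Commute (1 - QW W) S := by
    have : QW W * S = S * QW W := by rw [← hSS, mul_assoc, ← mul_assoc]
    unfold Commute SemiconjBy
    rw [mul_sub, sub_mul, one_mul, mul_one, this]
  have hcommGS : Commute G S := by
    have h := hcommQS
    unfold Commute SemiconjBy at h ⊢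
    calc G * S = G * S * ((1 - QW W) * G) := by rw [hIQG, mul_one]
      _ = G * (S * (1 - QW W)) * G := by rw [mul_assoc, mul_assoc, mul_assoc]
      _ = G * ((1 - QW W) * S) * G := by rw [h]
      _ = (G * (1 - QW W)) * (S * G) := by rw [mul_assoc, mul_assoc, mul_assoc]
      _ = S * G := by rw [hGIQ, one_mul]
  -- nonnegativity of (G * Q^(t+1)) x x
  have hGQpos : 0 ≤ (G * QW W ^ (t+1)) x x := by
    have hcomm2 : Commute G (S ^ (t+1)) := hcommGS.pow_right (t+1)
    have hdecomp : G * QW W ^ (t+1) = S ^ (t+1) * G * S ^ (t+1) := by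
      rw [hQpow, two_mul, pow_add, ← mul_assoc, hcomm2.eq]
    rw [hdecomp, entry_eq_dot (S ^ (t+1) * G * S ^ (t+1)) x]
    set e : Fin n → ℝ := Pi.single x 1 with he
    have h1 : e ⬝ᵥ (S ^ (t+1) * G * S ^ (t+1)) *ᵥ e
        = (S ^ (t+1) *ᵥ e) ⬝ᵥ G *ᵥ (S ^ (t+1) *ᵥ e) := by
      rw [← Matrix.mulVec_mulVec, ← Matrix.mulVec_mulVec,
        herm_dot_mulVec (hSherm.pow (t+1))]
    rw [h1]
    set w := S ^ (t+1) *ᵥ e with hwdef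
    set u := G *ᵥ w with hudef
    have h2 : (1 - QW W) *ᵥ u = w := by
      rw [hudef, Matrix.mulVec_mulVec, hIQG, Matrix.one_mulVec]
    have h3 : w ⬝ᵥ u = u ⬝ᵥ (1 - QW W) *ᵥ u := by
      rw [← h2, dotProduct_comm]
    rw [h3]
    have := hpd.posSemidef.dotProduct_mulVec_nonneg u
    simpa [star_trivial] using this
  -- geometric sum identity
  have hgeom : ∀ m : ℕ, (1 - QW W) * (∑ s ∈ Finset.range m, QW W ^ (s+1))
      = QW W - QW W ^ (m+1) := by
    intro m
    induction m with
    | zero => simp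
    | succ m ih =>
      rw [Finset.sum_range_succ, mul_add, ih, sub_mul, one_mul]
      have : QW W * QW W ^ (m+1) = QW W ^ (m+2) := (pow_succ' (QW W) (m+1)).symm
      rw [this]
      abel
  have hsum : (∑ s ∈ Finset.range t, QW W ^ (s+1)) = G - 1 - G * QW W ^ (t+1) := by
    have h1 : G * ((1 - QW W) * (∑ s ∈ Finset.range t, QW W ^ (s+1)))
        = ∑ s ∈ Finset.range t, QW W ^ (s+1) := by
      rw [← mul_assoc, hGIQ, one_mul]
    rw [← h1, hgeom, mul_sub]
    have hGQ : G * QW W = G - 1 := by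
      have h2 : G * (1 - QW W) = 1 := hGIQ
      rw [mul_sub, mul_one] at h2
      linear_combination (norm := abel) -h2
    rw [hGQ]
  -- entrywise
  have hentry : ∑ s ∈ Finset.range t, (QW W ^ (s+1)) x x ≤ G x x - 1 := by
    have h1 : (∑ s ∈ Finset.range t, QW W ^ (s+1)) x x
        = ∑ s ∈ Finset.range t, (QW W ^ (s+1)) x x := by
      rw [Matrix.sum_apply]
    have h2 := congrFun (congrFun hsum x) x
    simp only [Matrix.sub_apply, Matrix.one_apply_eq] at h2
    rw [h1] at h2
    rw [h2]
    linarith [hGQpos]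
  -- monotonicity gives t * q_t ≤ sum
  have hfinal : (t : ℝ) * (QW W ^ t) x x ≤ ∑ s ∈ Finset.range t, (QW W ^ (s+1)) x x := by
    have h1 : ∀ s ∈ Finset.range t, (QW W ^ t) x x ≤ (QW W ^ (s+1)) x x := by
      intro s hs
      exact hmono (s+1) t (Finset.mem_range.mp hs)
    calc (t : ℝ) * (QW W ^ t) x x = ∑ _s ∈ Finset.range t, (QW W ^ t) x x := by
          rw [Finset.sum_const, Finset.card_range, nsmul_eq_mul]
      _ ≤ ∑ s ∈ Finset.range t, (QW W ^ (s+1)) x x := Finset.sum_le_sum h1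
  linarith [hfinal, hentry]

end Green


section FinalAux

variable {W : Matrix (Fin n) (Fin n) ℝ}
  (hsym : ∀ x y, W x y = W y x) (hnn : ∀ x y, 0 ≤ W x y)
  (hd : ∀ z, 0 < degW W z)
  (hconn : (SimpleGraph.fromRel fun x y => W x y ≠ 0).Connected)

include hsym in
lemma energy_eq (f : Fin n → ℝ) :
    energyW W f = ∑ z, degW W z * f z ^ 2 - ∑ z, f z * ∑ y, W z y * f y := by
  rw [energyW]
  have h1 : ∀ z, ∑ y, W z y * (f z - f y) ^ 2
      = degW W z * f z ^ 2 - 2 * (f z * ∑ y, W z y * f y) + ∑ y, W z y * f y ^ 2 := by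
    intro z
    rw [degW, Finset.sum_mul, Finset.mul_sum, Finset.mul_sum]
    rw [← Finset.sum_sub_distrib, ← Finset.sum_add_distrib]
    refine Finset.sum_congr rfl fun y _ => by ring
  rw [Finset.sum_congr rfl fun z _ => h1 z, Finset.sum_add_distrib, Finset.sum_sub_distrib]
  have h2 : ∑ z, ∑ y, W z y * f y ^ 2 = ∑ z, degW W z * f z ^ 2 := by
    rw [Finset.sum_comm]
    refine Finset.sum_congr rfl fun y _ => ?_
    rw [← Finset.sum_mul, col_sum hsym]
  rw [h2, ← Finset.mul_sum]
  ring

include hsym in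
lemma energy_eq' (f : Fin n → ℝ) :
    energyW W f = ∑ z, f z * (degW W z * f z - ∑ y, W z y * f y) := by
  rw [energy_eq hsym, ← Finset.sum_sub_distrib]
  refine Finset.sum_congr rfl fun z _ => by ring

include hsym hnn hd hconn in
lemma green_diag_le (x : Fin n) :
    (1 - QW W)⁻¹ x x
      ≤ degW W x / volW W
        + 2 * degW W x * sSup {r | ∃ y : Fin n, r = Reff W x y} := by
  classical
  have hvol := vol_pos hd hconn
  have hsq := sqv_pos hd hconn
  have hpd : (1 - QW W).PosDef := one_sub_Q_posdef hsym hnn hd hconn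
  have hdet : IsUnit (1 - QW W).det := isUnit_iff_ne_zero.mpr hpd.det_pos.ne'
  have hIQG : (1 - QW W) * (1 - QW W)⁻¹ = 1 := Matrix.mul_nonsing_inv _ hdet
  set G := (1 - QW W)⁻¹ with hGdef
  set γ : Fin n → ℝ := fun z => G z x with hγdef
  have hGe : G *ᵥ (Pi.single x 1) = γ := by
    rw [Matrix.mulVec_single]
    funext z
    simp [hγdef]
  have hIQγ : (1 - QW W) *ᵥ γ = Pi.single x 1 := by
    rw [← hGe, Matrix.mulVec_mulVec, hIQG, Matrix.one_mulVec]
  have hIQherm : (1 - QW W).IsHermitian := hpd.1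
  have hphig : phiW W ⬝ᵥ γ = phiW W x := by
    have h1 := herm_dot_mulVec hIQherm (phiW W) γ
    have h2 : (1 - QW W) *ᵥ phiW W = phiW W := by
      rw [sub_mulVec, one_mulVec, Q_mulVec_phi hsym hnn hd hconn, sub_zero]
    rw [h2, hIQγ] at h1
    rw [dotProduct_single, mul_one] at h1
    exact h1.symm
  have hsdγ : ∑ z, sdW W z * γ z = sdW W x := by
    have h1 : ∑ z, phiW W z * γ z = phiW W x := hphig
    have h2 : ∀ z, phiW W z * γ z = sdW W z * γ z / Real.sqrt (volW W) := by
      intro z; rw [phiW]; ring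
    rw [Finset.sum_congr rfl fun z _ => h2 z, ← Finset.sum_div, phiW,
      div_eq_div_iff hsq.ne' hsq.ne'] at h1
    exact mul_right_cancel₀ hsq.ne' h1
  -- componentwise equation
  have hstar : ∀ z, γ z - (∑ y, W z y / (sdW W z * sdW W y) * γ y)
      = 2 * ((if z = x then 1 else 0) - phiW W z * phiW W x) := by
    intro z
    have h := congrFun hIQγ z
    have hQγ : (QW W *ᵥ γ) z
        = 2⁻¹ * (γ z + ∑ y, W z y / (sdW W z * sdW W y) * γ y) - phiW W x * phiW W z := by
      rw [QW, sub_mulVec]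
      have hsγ : (symM W *ᵥ γ) z
          = 2⁻¹ * (γ z + ∑ y, W z y / (sdW W z * sdW W y) * γ y) := by
        rw [symM_eq, smul_mulVec, add_mulVec, one_mulVec]
        have : (NW W *ᵥ γ) z = ∑ y, W z y / (sdW W z * sdW W y) * γ y := by
          simp [NW, mulVec, dotProduct]
        simp only [Pi.smul_apply, Pi.add_apply, smul_eq_mul, this]
      have hvγ : (vecMulVec (phiW W) (phiW W) *ᵥ γ) z = phiW W x * phiW W z := by
        rw [vecMulVec_mulVec_eq, hphig]
        simp [mul_comm]
      simp only [Pi.sub_apply, hsγ, hvγ]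
    have hone : ((1 - QW W) *ᵥ γ) z = γ z - (QW W *ᵥ γ) z := by
      rw [sub_mulVec, one_mulVec]
      simp
    rw [hone, hQγ] at h
    rw [Pi.single_apply] at h
    linear_combination 2 * h
  -- the harmonic-like function
  set a : Fin n → ℝ := fun z => γ z / sdW W z with hadef
  set E := energyW W a with hEdef
  have hγa : ∀ z, γ z = sdW W z * a z := by
    intro z
    rw [hadef]
    field_simp [(sd_pos hd z).ne']
  -- Laplace equation
  have hLap : ∀ z, degW W z * a z - ∑ y, W z y * a y
      = 2 * sdW W x * ((if z = x then 1 else 0) - degW W z / volW W) := by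
    intro z
    have h := hstar z
    have hz := (sd_pos hd z).ne'
    have e1 : degW W z * a z = sdW W z * γ z := by
      rw [← sd_sq hd z, hγa z]; ring
    have e2 : ∑ y, W z y * a y
        = sdW W z * ∑ y, W z y / (sdW W z * sdW W y) * γ y := by
      rw [Finset.mul_sum]
      refine Finset.sum_congr rfl fun y _ => ?_
      have hy := (sd_pos hd y).ne'
      rw [hγa y]
      field_simp
    have e3 : phiW W z * phiW W x = sdW W z * sdW W x / volW W := by
      rw [phiW, phiW, div_mul_div_comm, Real.mul_self_sqrt hvol.le]
    rw [e1, e2]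
    rw [e3] at h
    have hzz := sd_sq hd z
    rcases eq_or_ne z x with rfl | hzx
    · rw [if_pos rfl] at h ⊢
      linear_combination sdW W z * h - (2 * sdW W z / volW W) * hzz
    · rw [if_neg hzx] at h ⊢
      linear_combination sdW W z * h - (2 * sdW W x / volW W) * hzz
  -- energy identity
  have hsum_da : ∑ z, degW W z * a z = sdW W x := by
    rw [← hsdγ]
    refine Finset.sum_congr rfl fun z _ => ?_
    rw [← sd_sq hd z, hγa z]; ring
  have hEeq : E = 2 * sdW W x * (a x - sdW W x / volW W) := by
    rw [hEdef, energy_eq' hsym]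
    rw [Finset.sum_congr rfl fun z _ => by rw [hLap z]]
    have h1 : ∀ z, a z * (2 * sdW W x * ((if z = x then 1 else 0) - degW W z / volW W))
        = 2 * sdW W x * (a z * (if z = x then 1 else 0) - (degW W z * a z) / volW W) := by
      intro z; ring
    rw [Finset.sum_congr rfl fun z _ => h1 z, ← Finset.mul_sum, Finset.sum_sub_distrib,
      ← Finset.sum_div, hsum_da]
    have h2 : ∑ z, a z * (if z = x then 1 else 0) = a x := by
      simp [mul_ite]
    rw [h2]
  -- bound on E
  set R := sSup {r | ∃ y : Fin n, r = Reff W x y} with hRdef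
  have hRnn : 0 ≤ R := Rdiam_nonneg x
  have hEnn : 0 ≤ E := energy_nonneg hnn a
  have hptw : ∀ z, a x - a z ≤ Real.sqrt (R * E) := by
    intro z
    rcases eq_or_ne (a x) (a z) with he | hne
    · have := Real.sqrt_nonneg (R * E); linarith [he.ge, he.le]
    · have h1 : (a x - a z) ^ 2 ≤ Reff W x z * E :=
        sq_le_Reff_mul_energy hsym hnn hconn a hne
      have h2 : Reff W x z * E ≤ R * E :=
        mul_le_mul_of_nonneg_right (Reff_le_Rdiam x z) hEnn
      have h3 : a x - a z ≤ |a x - a z| := le_abs_self _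
      have h4 : |a x - a z| = Real.sqrt ((a x - a z) ^ 2) := (Real.sqrt_sq_eq_abs _).symm
      have h5 : Real.sqrt ((a x - a z) ^ 2) ≤ Real.sqrt (R * E) :=
        Real.sqrt_le_sqrt (le_trans h1 h2)
      linarith
  have hsumrep : a x - sdW W x / volW W = ∑ z, degW W z / volW W * (a x - a z) := by
    have h1 : ∀ z, degW W z / volW W * (a x - a z)
        = degW W z * a x / volW W - degW W z * a z / volW W := by intro z; ring
    rw [Finset.sum_congr rfl fun z _ => h1 z, Finset.sum_sub_distrib, ← Finset.sum_div,
      ← Finset.sum_div, ← Finset.sum_mul, hsum_da]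
    rw [show (∑ z, degW W z) = volW W from rfl]
    field_simp
  have hax : a x - sdW W x / volW W ≤ Real.sqrt (R * E) := by
    rw [hsumrep]
    have h1 : ∀ z ∈ Finset.univ, degW W z / volW W * (a x - a z)
        ≤ degW W z / volW W * Real.sqrt (R * E) := by
      intro z _
      exact mul_le_mul_of_nonneg_left (hptw z) (div_nonneg (hd z).le hvol.le)
    refine le_trans (Finset.sum_le_sum h1) ?_
    rw [← Finset.sum_mul, ← Finset.sum_div, show (∑ z, degW W z) = volW W from rfl,
      div_self hvol.ne', one_mul]
  have hsdx := sd_pos hd x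
  have hEle : E ≤ 2 * sdW W x * Real.sqrt (R * E) :=
    hEeq.trans_le (mul_le_mul_of_nonneg_left hax (mul_nonneg (by norm_num) hsdx.le))
  have hEfin : E ≤ 4 * degW W x * R := by
    have hs2 : Real.sqrt (R * E) ^ 2 = R * E := Real.sq_sqrt (mul_nonneg hRnn hEnn)
    have hxx : sdW W x * sdW W x = degW W x := sd_sq hd x
    rcases eq_or_lt_of_le hEnn with h0 | hpos
    · rw [← h0]
      exact mul_nonneg (mul_nonneg (by norm_num) (hd x).le) hRnn
    · nlinarith [hEle, Real.sqrt_nonneg (R * E)]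
  have hGxx : G x x = E / 2 + degW W x / volW W := by
    have hγx : γ x = sdW W x * a x := hγa x
    have hgg : γ x = G x x := rfl
    have hxx : sdW W x * sdW W x = degW W x := sd_sq hd x
    rw [← hgg, hγx]
    linear_combination (-1/2 : ℝ) * hEeq + hxx / volW W
  rw [hGxx]
  have hdx := hd x
  nlinarith [hEfin]

end FinalAux

section Bridge

variable {W : Matrix (Fin n) (Fin n) ℝ}
  (hsym : ∀ x y, W x y = W y x) (hnn : ∀ x y, 0 ≤ W x y)
  (hd : ∀ z, 0 < degW W z)
  (hconn : (SimpleGraph.fromRel fun x y => W x y ≠ 0).Connected)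

include hd in
lemma lazyP_factor :
    lazyP W = Matrix.diagonal (fun z => (sdW W z)⁻¹) * symM W * Matrix.diagonal (sdW W) := by
  ext z y
  rw [Matrix.mul_diagonal, Matrix.diagonal_mul]
  have hz := (sd_pos hd z).ne'
  have hy := (sd_pos hd y).ne'
  have hzz := sd_sq hd z
  rw [lazyP, symM]
  simp only [Matrix.of_apply]
  rcases eq_or_ne z y with rfl | hzy
  · rw [show (∑ w, W z w) = degW W z from rfl, ← hzz]
    field_simp
  · simp only [if_neg hzy]
    rw [show (∑ w, W z w) = degW W z from rfl, ← hzz]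
    field_simp
    ring

include hd in
lemma lazyP_pow_diag (x : Fin n) (t : ℕ) :
    (lazyP W ^ t) x x = (symM W ^ t) x x := by
  have hDD : Matrix.diagonal (sdW W) * Matrix.diagonal (fun z => (sdW W z)⁻¹) = 1 := by
    rw [Matrix.diagonal_mul_diagonal]
    rw [show (fun z => sdW W z * (sdW W z)⁻¹) = fun _ => (1:ℝ) from funext fun z =>
      mul_inv_cancel₀ (sd_pos hd z).ne']
    exact Matrix.diagonal_one
  have hconj : ∀ m : ℕ, lazyP W ^ m
      = Matrix.diagonal (fun z => (sdW W z)⁻¹) * symM W ^ m * Matrix.diagonal (sdW W) := by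
    intro m
    induction m with
    | zero =>
      rw [pow_zero, pow_zero, mul_one]
      rw [Matrix.diagonal_mul_diagonal]
      rw [show (fun z => (sdW W z)⁻¹ * sdW W z) = fun _ => (1:ℝ) from funext fun z =>
        inv_mul_cancel₀ (sd_pos hd z).ne']
      exact Matrix.diagonal_one.symm
    | succ m ih =>
      rw [pow_succ, ih, lazyP_factor hd, pow_succ]
      have : Matrix.diagonal (fun z => (sdW W z)⁻¹) * symM W ^ m * Matrix.diagonal (sdW W) *
          (Matrix.diagonal (fun z => (sdW W z)⁻¹) * symM W * Matrix.diagonal (sdW W))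
          = Matrix.diagonal (fun z => (sdW W z)⁻¹) * symM W ^ m *
            (Matrix.diagonal (sdW W) * Matrix.diagonal (fun z => (sdW W z)⁻¹)) *
            (symM W * Matrix.diagonal (sdW W)) := by
        simp only [mul_assoc]
      rw [this, hDD, mul_one]
      simp only [← mul_assoc]
  rw [hconj t, Matrix.mul_diagonal, Matrix.diagonal_mul]
  have hx := (sd_pos hd x).ne'
  field_simp

lemma mul_vecMulVec (A : Matrix (Fin n) (Fin n) ℝ) (a b : Fin n → ℝ) :
    A * vecMulVec a b = vecMulVec (A *ᵥ a) b := by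
  ext z y
  simp only [Matrix.mul_apply, vecMulVec_apply, mulVec, dotProduct, Finset.sum_mul]
  exact Finset.sum_congr rfl fun k _ => by ring

include hsym hnn hd hconn in
lemma Mpow_phi (t : ℕ) : symM W ^ t *ᵥ phiW W = phiW W := by
  induction t with
  | zero => rw [pow_zero, Matrix.one_mulVec]
  | succ t ih =>
    rw [pow_succ, ← Matrix.mulVec_mulVec, symM_mulVec_phi hsym hnn hd hconn, ih]

include hsym hnn hd hconn in
lemma Qpow_shift (t : ℕ) (ht : 1 ≤ t) :
    QW W ^ t = symM W ^ t - vecMulVec (phiW W) (phiW W) := by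
  induction t with
  | zero => omega
  | succ t ih =>
    rcases Nat.eq_or_lt_of_le ht with h1 | h1
    · rw [← h1]
      simp [QW]
    · have ht' : 1 ≤ t := by omega
      rw [pow_succ, ih ht', QW, sub_mul, mul_sub, mul_sub, ← pow_succ]
      have hΦM : vecMulVec (phiW W) (phiW W) * symM W = vecMulVec (phiW W) (phiW W) := by
        have h2 : (vecMulVec (phiW W) (phiW W) * symM W)ᵀ
            = symM W * vecMulVec (phiW W) (phiW W) := by
          rw [Matrix.transpose_mul, herm_transpose (symM_herm hsym)]
          congr 1
          ext zz yy
          simp [Matrix.transpose_apply, vecMulVec_apply, mul_comm]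
        have h3 : symM W * vecMulVec (phiW W) (phiW W) = vecMulVec (phiW W) (phiW W) := by
          rw [mul_vecMulVec, symM_mulVec_phi hsym hnn hd hconn]
        have h4 := congrArg Matrix.transpose (h2.trans h3)
        rw [Matrix.transpose_transpose] at h4
        rw [h4]
        ext zz yy
        simp [Matrix.transpose_apply, vecMulVec_apply, mul_comm]
      have hMtΦ : symM W ^ t * vecMulVec (phiW W) (phiW W)
          = vecMulVec (phiW W) (phiW W) := by
        rw [mul_vecMulVec, Mpow_phi hsym hnn hd hconn]
      have hΦΦ : vecMulVec (phiW W) (phiW W) * vecMulVec (phiW W) (phiW W)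
          = vecMulVec (phiW W) (phiW W) := by
        rw [mul_vecMulVec, vecMulVec_mulVec_eq, phi_norm hd hconn, one_smul]
      rw [hMtΦ, hΦM, hΦΦ]
      abel

end Bridge

end Stmt6Aux

open Stmt6Aux in
theorem stmt6 {n : ℕ} (W : Matrix (Fin n) (Fin n) ℝ)
    (hsym : ∀ x y, W x y = W y x) (hnn : ∀ x y, 0 ≤ W x y) (hloop : ∀ x, W x x = 0)
    (hconn : (SimpleGraph.fromRel fun x y => W x y ≠ 0).Connected)
    (x : Fin n) (t : ℕ) (ht : 1 ≤ t) :
    (lazyP W ^ t) x x / ((∑ z, W x z) / (∑ u, ∑ z, W u z)) - 1 <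
      2 * (∑ u, ∑ z, W u z) * sSup {r | ∃ y : Fin n, r = Reff W x y} / t := by
  classical
  by_cases hdall : ∀ z, 0 < degW W z
  · -- main case
    have hvol : 0 < volW W := vol_pos hdall hconn
    have hdx : 0 < degW W x := hdall x
    have htpos : (0:ℝ) < t := by exact_mod_cast lt_of_lt_of_le one_pos ht
    -- degree strictly less than volume
    have hdxvol : degW W x < volW W := by
      have hex : ∃ y, W x y ≠ 0 := by
        by_contra h
        push_neg at h
        have : degW W x = 0 := Finset.sum_eq_zero fun y _ => h y
        exact hdx.ne' this
      obtain ⟨y, hy⟩ := hex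
      have hyx : y ≠ x := by
        intro h
        rw [h, hloop] at hy
        exact hy rfl
      have h1 : degW W x + ∑ z ∈ Finset.univ.erase x, degW W z = volW W :=
        Finset.add_sum_erase Finset.univ (degW W) (Finset.mem_univ x)
      have h2 : degW W y ≤ ∑ z ∈ Finset.univ.erase x, degW W z :=
        Finset.single_le_sum (fun z _ => (hdall z).le)
          (Finset.mem_erase.mpr ⟨hyx, Finset.mem_univ y⟩)
      have h3 : 0 < degW W y := hdall y
      linarith
    have key := key_bound hsym hnn hdall hconn x t ht
    have green := green_diag_le hsym hnn hdall hconn x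
    have hbridge := lazyP_pow_diag hdall x t
    have hshift := Qpow_shift hsym hnn hdall hconn t ht
    have hphix : phiW W x * phiW W x = degW W x / volW W := by
      rw [phiW, div_mul_div_comm, sd_sq hdall x, Real.mul_self_sqrt hvol.le]
    have hMt_eq : (symM W ^ t) x x = (QW W ^ t) x x + degW W x / volW W := by
      have h := congrFun (congrFun hshift x) x
      rw [Matrix.sub_apply, vecMulVec_apply, hphix] at h
      linarith
    set R := sSup {r | ∃ y : Fin n, r = Reff W x y} with hRdef
    set q := (QW W ^ t) x x with hqdef
    have htq : (t:ℝ) * q < 2 * degW W x * R := by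
      have h1 : (t:ℝ) * q ≤ (1 - QW W)⁻¹ x x - 1 := key
      have h2 : (1 - QW W)⁻¹ x x ≤ degW W x / volW W + 2 * degW W x * R := green
      have h3 : degW W x / volW W < 1 := (div_lt_one hvol).mpr hdxvol
      linarith
    rw [show (∑ z, W x z) = degW W x from rfl, show (∑ u, ∑ z, W u z) = volW W from rfl,
      hbridge, hMt_eq]
    have hLHSeq : (q + degW W x / volW W) / (degW W x / volW W) - 1 = q * volW W / degW W x := by
      field_simp
      ring
    rw [hLHSeq]
    rw [div_lt_div_iff₀ hdx htpos]
    have h2 : q * volW W * t = ((t:ℝ) * q) * volW W := by ring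
    have h3 : 2 * volW W * R * degW W x = (2 * degW W x * R) * volW W := by ring
    rw [h2, h3]
    exact mul_lt_mul_of_pos_right htq hvol
  · -- degenerate case: some vertex has zero degree, so n = 1 morally
    push_neg at hdall
    obtain ⟨z, hz⟩ := hdall
    have hz0 : degW W z = 0 :=
      le_antisymm hz (Finset.sum_nonneg fun y _ => hnn z y)
    have hWz : ∀ y, W z y = 0 := by
      intro y
      have := (Finset.sum_eq_zero_iff_of_nonneg (fun y _ => hnn z y)).mp hz0
      exact this y (Finset.mem_univ y)
    have hall : ∀ w, w = z := by
      intro w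
      by_contra hw
      obtain ⟨p⟩ := hconn.preconnected z w
      cases p with
      | nil => exact hw rfl
      | cons h p =>
        rw [SimpleGraph.fromRel_adj] at h
        rcases h.2 with h1 | h1
        · exact h1 (hWz _)
        · exact h1 (by rw [hsym]; exact hWz _)
    have hvol0 : (∑ u, ∑ zz, W u zz) = 0 := by
      apply Finset.sum_eq_zero
      intro u _
      rw [hall u]
      exact hz0
    have hdx0 : (∑ zz, W x zz) = 0 := by
      rw [hall x]
      exact hz0
    rw [hdx0, hvol0]
    norm_num
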